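/- arXiv:1610.01965 — 3 statements merged into one kernel-verified Lean document; each statement's English description precedes it below -/
import Mathlib

section
/- Let n be a positive integer, let λ₁, …, λₙ be distinct points of the open unit disc 𝔻 ⊆ ℂ, and let z₁, …, zₙ ∈ ℂ. There exists a holomorphic function φ : 𝔻 → ℂ with φ(λᵢ) = zᵢ for each i and sup_{λ∈𝔻} |φ(λ)| ≤ 1 if and only if the n×n matrix whose (i,j) entry is (1 − zᵢ·conj(zⱼ))/(1 − λᵢ·conj(λⱼ)) is positive semidefinite. -/
open Complex Metric
open scoped ComplexOrder Matrix

namespace NPick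

local notation "conj'" => starRingEnd ℂ

noncomputable def mob (a w : ℂ) : ℂ := (w - a) / (1 - conj' a * w)

lemma one_sub_ne {x : ℂ} (h : ‖x‖ < 1) : (1 : ℂ) - x ≠ 0 := by
  intro h0
  rw [sub_eq_zero] at h0
  rw [← h0] at h
  simp at h

lemma one_sub_mul_ne {a w : ℂ} (ha : ‖a‖ < 1) (hw : ‖w‖ ≤ 1) : (1 : ℂ) - a * w ≠ 0 := by
  apply one_sub_ne
  rw [norm_mul]
  calc ‖a‖ * ‖w‖ ≤ ‖a‖ * 1 := by
        exact mul_le_mul_of_nonneg_left hw (norm_nonneg _)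
    _ = ‖a‖ := mul_one _
    _ < 1 := ha

lemma normSq_lt_one {x : ℂ} (h : ‖x‖ < 1) : normSq x < 1 := by
  rw [← Complex.sq_norm]
  have : ‖x‖ < 1 := h
  nlinarith [norm_nonneg x]

lemma norm_lt_one_of_normSq {x : ℂ} (h : normSq x < 1) : ‖x‖ < 1 := by
  rw [← Complex.sq_norm] at h
  nlinarith [norm_nonneg x]

lemma key_normSq (a w : ℂ) :
    normSq (1 - conj' a * w) - normSq (w - a) = (1 - normSq a) * (1 - normSq w) := by
  have h : ((normSq (1 - conj' a * w) - normSq (w - a) : ℝ) : ℂ)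
      = (((1 - normSq a) * (1 - normSq w) : ℝ) : ℂ) := by
    push_cast
    rw [← Complex.mul_conj (1 - conj' a * w), ← Complex.mul_conj (w - a),
      ← Complex.mul_conj a, ← Complex.mul_conj w]
    simp only [map_sub, map_mul, map_one, Complex.conj_conj]
    ring
  exact_mod_cast h

lemma norm_mob_lt {a w : ℂ} (ha : ‖a‖ < 1) (hw : ‖w‖ < 1) : ‖mob a w‖ < 1 := by
  have hd : (1 : ℂ) - conj' a * w ≠ 0 := by
    apply one_sub_mul_ne (by simpa using ha) hw.le
  have h1 := key_normSq a w
  have ha' := normSq_lt_one ha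
  have hw' := normSq_lt_one hw
  have hpos : 0 < normSq (1 - conj' a * w) := normSq_pos.2 hd
  apply norm_lt_one_of_normSq
  rw [mob, normSq_div]
  rw [div_lt_one hpos]
  nlinarith [normSq_nonneg (w - a)]

lemma mob_self (a : ℂ) : mob a a = 0 := by simp [mob]

lemma mob_mob {a w : ℂ} (ha : ‖a‖ < 1) (hw : ‖w‖ < 1) : mob (-a) (mob a w) = w := by
  have hd : (1 : ℂ) - conj' a * w ≠ 0 := one_sub_mul_ne (by simpa using ha) hw.le
  have hd2 : (1 : ℂ) - a * conj' a ≠ 0 := one_sub_mul_ne ha (by simpa using ha.le)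
  have hd' : (1 : ℂ) - w * conj' a ≠ 0 := by rwa [mul_comm]
  rw [mob, mob]
  rw [map_neg]
  field_simp
  linear_combination w * mul_inv_cancel₀ hd2

lemma mob_kernel (a x y : ℂ) (hax : (1:ℂ) - conj' a * x ≠ 0) (hay : (1:ℂ) - a * conj' y ≠ 0) :
    1 - mob a x * conj' (mob a y)
      = ((1 - a * conj' a) * (1 - x * conj' y)) / ((1 - conj' a * x) * (1 - a * conj' y)) := by
  have hax' : (1:ℂ) - x * conj' a ≠ 0 := by rwa [mul_comm]
  rw [mob, mob]
  simp only [map_div₀, map_sub, map_mul, map_one, Complex.conj_conj]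
  field_simp
  ring

lemma mob_diffOn {a : ℂ} (ha : ‖a‖ < 1) : DifferentiableOn ℂ (mob a) (ball (0:ℂ) 1) := by
  apply DifferentiableOn.div
  · exact (differentiableOn_id.sub (differentiableOn_const a))
  · exact (differentiableOn_const _).sub ((differentiableOn_const _).mul differentiableOn_id)
  · intro x hx
    exact one_sub_mul_ne (by simpa using ha) (le_of_lt (by simpa [mem_ball_zero_iff] using hx))

lemma mob_mapsTo {a : ℂ} (ha : ‖a‖ < 1) : Set.MapsTo (mob a) (ball (0:ℂ) 1) (ball (0:ℂ) 1) :=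
  fun w hw => mem_ball_zero_iff.2 (norm_mob_lt ha (mem_ball_zero_iff.1 hw))

lemma mob_zero (a : ℂ) : mob (-a) 0 = a := by simp [mob]

/-- generic scaled-congruence PSD transfer -/
lemma psd_scale {k : ℕ} {M : Matrix (Fin k) (Fin k) ℂ} (hM : M.PosSemidef)
    (c : ℝ) (hc : 0 ≤ c) (d : Fin k → ℂ) (N : Matrix (Fin k) (Fin k) ℂ)
    (hN : ∀ i j, N i j = (c : ℂ) * d i * conj' (d j) * M i j) : N.PosSemidef := by
  set s : ℝ := Real.sqrt c with hs
  have hsq : ((s : ℂ)) * (s : ℂ) = (c : ℂ) := by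
    rw [← Complex.ofReal_mul, hs, Real.mul_self_sqrt hc]
  have h : N = (Matrix.diagonal fun i => (s : ℂ) * d i) * M *
      (Matrix.diagonal fun i => (s : ℂ) * d i)ᴴ := by
    ext i j
    rw [Matrix.diagonal_conjTranspose, Matrix.mul_diagonal, Matrix.diagonal_mul, hN i j]
    simp only [Pi.star_apply, star_mul', Complex.star_def, Complex.conj_ofReal]
    linear_combination (-(d i * conj' (d j) * M i j)) * hsq
  rw [h]
  exact hM.mul_mul_conjTranspose_same _

lemma psd_diag {k : ℕ} {M : Matrix (Fin k) (Fin k) ℂ} (hM : M.PosSemidef) (i : Fin k) :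
    0 ≤ M i i := by
  have := hM.dotProduct_mulVec_nonneg (Pi.single i 1)
  simpa [Matrix.mulVec, dotProduct, Pi.single_apply, apply_ite, mul_ite,
    Finset.sum_ite_eq', Finset.sum_ite_eq] using this

lemma psd_row {k : ℕ} {M : Matrix (Fin k) (Fin k) ℂ} (hM : M.PosSemidef) {i : Fin k}
    (h : M i i = 0) (j : Fin k) : M i j = 0 := by
  obtain ⟨B, rfl⟩ : ∃ B : Matrix (Fin k) (Fin k) ℂ, M = Bᴴ * B := by
    open scoped MatrixOrder in
    exact CStarAlgebra.nonneg_iff_eq_star_mul_self.mp hM.nonneg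
  have hii : ∀ l, B l i = 0 := by
    have h2 : (∑ l, normSq (B l i) : ℝ) = 0 := by
      have : ((∑ l, normSq (B l i) : ℝ) : ℂ) = 0 := by
        rw [← h, Matrix.mul_apply]
        push_cast
        refine Finset.sum_congr rfl fun l _ => ?_
        rw [Matrix.conjTranspose_apply, Complex.star_def]
        exact Complex.normSq_eq_conj_mul_self
      exact_mod_cast this
    intro l
    have := (Finset.sum_eq_zero_iff_of_nonneg (fun l _ => normSq_nonneg (B l i))).1 h2 l
      (Finset.mem_univ l)
    exact normSq_eq_zero.1 this
  rw [Matrix.mul_apply]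
  apply Finset.sum_eq_zero
  intro l _
  rw [Matrix.conjTranspose_apply, hii l]
  simp

lemma psd_ones {k : ℕ} : (Matrix.of fun _ _ : Fin k => (1:ℂ)).PosSemidef := by
  refine Matrix.PosSemidef.of_dotProduct_mulVec_nonneg ?_ ?_
  · ext i j
    simp [Matrix.conjTranspose_apply]
  · intro x
    have h : star x ⬝ᵥ (Matrix.of fun _ _ : Fin k => (1:ℂ)) *ᵥ x
        = star (∑ j, x j) * (∑ j, x j) := by
      simp only [dotProduct, Matrix.mulVec, Matrix.of_apply, one_mul, Pi.star_apply]
      rw [star_sum, Finset.sum_mul]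
    rw [h]
    exact star_mul_self_nonneg _

lemma psd_border {k : ℕ} {M : Matrix (Fin (k+1)) (Fin (k+1)) ℂ}
    (h0 : ∀ j, M 0 j = 0) (h0' : ∀ i, M i 0 = 0)
    (h : (M.submatrix Fin.succ Fin.succ).PosSemidef) : M.PosSemidef := by
  refine Matrix.PosSemidef.of_dotProduct_mulVec_nonneg ?_ ?_
  · ext i j
    rw [Matrix.conjTranspose_apply]
    induction i using Fin.cases with
    | zero => rw [h0 j, h0' j]; simp
    | succ i' =>
      induction j using Fin.cases with
      | zero => rw [h0 i'.succ, h0' i'.succ]; simp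
      | succ j' =>
        have := congrFun (congrFun h.1 i') j'
        simpa [Matrix.conjTranspose_apply] using this
  · intro x
    have e : star x ⬝ᵥ M *ᵥ x
        = star (x ∘ Fin.succ) ⬝ᵥ (M.submatrix Fin.succ Fin.succ) *ᵥ (x ∘ Fin.succ) := by
      simp [dotProduct, Matrix.mulVec, Fin.sum_univ_succ, h0, h0']
    rw [e]
    exact h.dotProduct_mulVec_nonneg _

lemma psd_subones {k : ℕ} {F : Matrix (Fin (k+1)) (Fin (k+1)) ℂ} (hF : F.PosSemidef)
    (hr : ∀ j, F 0 j = 1) : (Matrix.of fun i j => F i j - 1).PosSemidef := by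
  have hc : ∀ i, F i 0 = 1 := by
    intro i
    have h1 := congrFun (congrFun hF.1 i) 0
    rw [Matrix.conjTranspose_apply] at h1
    rw [← h1, hr i]
    simp
  set B : Matrix (Fin (k+1)) (Fin (k+1)) ℂ :=
    Matrix.of fun i j => (if i = j then (1:ℂ) else 0) - (if j = 0 then 1 else 0) with hB
  have hBF : ∀ i l, (B * F) i l = F i l - 1 := by
    intro i l
    rw [Matrix.mul_apply]
    simp [hB, sub_mul, Finset.sum_sub_distrib, Finset.sum_ite_eq, hr l]
  have key : Matrix.of (fun i j : Fin (k+1) => F i j - 1) = B * F * Bᴴ := by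
    ext i j
    rw [Matrix.mul_apply]
    simp only [Matrix.conjTranspose_apply, hBF]
    have hterm : ∀ l, (F i l - 1) * star (B j l)
        = (if j = l then (F i l - 1) else 0) - (if l = 0 then (F i l - 1) else 0) := by
      intro l
      have hstar : star (B j l) = (if j = l then (1:ℂ) else 0) - (if l = 0 then 1 else 0) := by
        simp only [hB, Matrix.of_apply, star_sub]
        split_ifs <;> simp
      rw [hstar]
      split_ifs <;> ring
    rw [Finset.sum_congr rfl (fun l _ => hterm l), Finset.sum_sub_distrib,
      Finset.sum_ite_eq, Finset.sum_ite_eq']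
    simp [hc i]
  rw [key]
  exact hF.mul_mul_conjTranspose_same _

lemma conj_ne {a y : ℂ} (h : (1:ℂ) - conj' a * y ≠ 0) : (1:ℂ) - a * conj' y ≠ 0 := by
  intro h0
  apply h
  have := congrArg conj' h0
  simpa using this

lemma entry_forward (a b x y u v : ℂ)
    (h1 : (1:ℂ) - conj' a * x ≠ 0) (h2 : (1:ℂ) - conj' a * y ≠ 0)
    (h3 : (1:ℂ) - conj' b * u ≠ 0) (h4 : (1:ℂ) - conj' b * v ≠ 0)
    (h5 : (1:ℂ) - a * conj' a ≠ 0) (h6 : (1:ℂ) - b * conj' b ≠ 0)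
    (h7 : (1:ℂ) - x * conj' y ≠ 0) :
    (1 - u * conj' v) / (1 - x * conj' y)
      = ((1 - a * conj' a) / (1 - b * conj' b))
        * ((1 - conj' b * u) / (1 - conj' a * x))
        * conj' ((1 - conj' b * v) / (1 - conj' a * y))
        * ((1 - mob b u * conj' (mob b v)) / (1 - mob a x * conj' (mob a y))) := by
  have h2' := conj_ne h2
  have h4' := conj_ne h4
  have h1c : (1:ℂ) - x * conj' a ≠ 0 := by rwa [mul_comm]
  have h2c : (1:ℂ) - conj' y * a ≠ 0 := by rwa [mul_comm]
  have h3c : (1:ℂ) - u * conj' b ≠ 0 := by rwa [mul_comm]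
  have h4c : (1:ℂ) - conj' v * b ≠ 0 := by rwa [mul_comm]
  have h5c : (1:ℂ) - conj' a * a ≠ 0 := by rwa [mul_comm]
  have h6c : (1:ℂ) - conj' b * b ≠ 0 := by rwa [mul_comm]
  have h7c : (1:ℂ) - conj' y * x ≠ 0 := by rwa [mul_comm]
  rw [mob_kernel b u v h3 h4', mob_kernel a x y h1 h2']
  simp only [map_div₀, map_sub, map_mul, map_one, Complex.conj_conj]
  field_simp

lemma entry_reverse (a b x y u v : ℂ)
    (h1 : (1:ℂ) - conj' a * x ≠ 0) (h2 : (1:ℂ) - conj' a * y ≠ 0)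
    (h3 : (1:ℂ) - conj' b * u ≠ 0) (h4 : (1:ℂ) - conj' b * v ≠ 0)
    (h5 : (1:ℂ) - a * conj' a ≠ 0) (h6 : (1:ℂ) - b * conj' b ≠ 0)
    (h7 : (1:ℂ) - x * conj' y ≠ 0) :
    (1 - mob b u * conj' (mob b v)) / (1 - mob a x * conj' (mob a y))
      = ((1 - b * conj' b) / (1 - a * conj' a))
        * ((1 - conj' a * x) / (1 - conj' b * u))
        * conj' ((1 - conj' a * y) / (1 - conj' b * v))
        * ((1 - u * conj' v) / (1 - x * conj' y)) := by
  have h2' := conj_ne h2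
  have h4' := conj_ne h4
  rw [mob_kernel b u v h3 h4', mob_kernel a x y h1 h2']
  simp only [map_div₀, map_sub, map_mul, map_one, Complex.conj_conj]
  field_simp

lemma entry_step (p q s t : ℂ) (hp : p ≠ 0) (hq : q ≠ 0) (hpq : (1:ℂ) - p * conj' q ≠ 0) :
    (1 - (s/p) * conj' (t/q)) / (1 - p * conj' q)
      = p⁻¹ * conj' (q⁻¹) * ((1 - s * conj' t) / (1 - p * conj' q) - 1) := by
  have hq' : conj' q ≠ 0 := by simpa using hq
  simp only [map_div₀, map_inv₀]
  field_simp
  ring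

lemma entry_step' (p q s t : ℂ) (hp : p ≠ 0) (hq : q ≠ 0) (hpq : (1:ℂ) - p * conj' q ≠ 0) :
    (1 - s * conj' t) / (1 - p * conj' q) - 1
      = p * conj' q * ((1 - (s/p) * conj' (t/q)) / (1 - p * conj' q)) := by
  have hq' : conj' q ≠ 0 := by simpa using hq
  simp only [map_div₀]
  field_simp
  ring

lemma norm_eq_one_of_normSq {x : ℂ} (h : normSq x = 1) : ‖x‖ = 1 := by
  have h2 : ‖x‖^2 = 1 := by rw [Complex.sq_norm]; exact h
  rw [← Real.sqrt_sq (norm_nonneg x), h2, Real.sqrt_one]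

lemma diag_real (u v : ℂ) :
    (1 - u * conj' u) / (1 - v * conj' v) = (((1 - normSq u) / (1 - normSq v) : ℝ) : ℂ) := by
  rw [Complex.mul_conj, Complex.mul_conj, Complex.ofReal_div, Complex.ofReal_sub,
    Complex.ofReal_sub, Complex.ofReal_one]

theorem key (n : ℕ) : ∀ (lam z : Fin n → ℂ), (∀ i, ‖lam i‖ < 1) → Function.Injective lam →
    ((∃ φ : ℂ → ℂ, DifferentiableOn ℂ φ (ball (0:ℂ) 1) ∧ (∀ i, φ (lam i) = z i) ∧
      (∀ w ∈ ball (0:ℂ) 1, ‖φ w‖ ≤ 1)) ↔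
    (Matrix.of fun i j : Fin n =>
      (1 - z i * conj' (z j)) / (1 - lam i * conj' (lam j))).PosSemidef) := by
  induction n with
  | zero =>
    intro lam z _ _
    constructor
    · intro _
      refine Matrix.PosSemidef.of_dotProduct_mulVec_nonneg ?_ (fun x => ?_)
      · ext i j
        exact i.elim0
      · simp [dotProduct]
    · intro _
      exact ⟨fun _ => 0, differentiableOn_const _, fun i => i.elim0, fun w _ => by simp⟩
  | succ n IH =>
    intro lam z hmem hinj
    have ha : ‖lam 0‖ < 1 := hmem 0
    have hcnorm : ∀ u : ℂ, ‖conj' u‖ = ‖u‖ := fun u => RCLike.norm_conj u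
    have hden : ∀ i j : Fin (n+1), (1:ℂ) - lam i * conj' (lam j) ≠ 0 := fun i j =>
      one_sub_mul_ne (hmem i) (le_of_eq (hcnorm (lam j)) |>.trans (hmem j).le)
    have hdlam : ∀ i, (0:ℝ) < 1 - normSq (lam i) := fun i => by
      have := normSq_lt_one (hmem i)
      linarith
    by_cases hb : ‖z 0‖ < 1
    · constructor
      · rintro ⟨φ, hφd, hφi, hφb⟩
        have hdz : (0:ℝ) < 1 - normSq (z 0) := by
          have := normSq_lt_one hb
          linarith
        have hstrict : ∀ w ∈ ball (0:ℂ) 1, ‖φ w‖ < 1 := by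
          intro w hw
          rcases lt_or_eq_of_le (hφb w hw) with h | h
          · exact h
          · exfalso
            have hmax : IsMaxOn (norm ∘ φ) (ball (0:ℂ) 1) w := by
              intro u hu
              have h2 := hφb u hu
              simpa [← h] using h2
            have heq := Complex.eqOn_of_isPreconnected_of_isMaxOn_norm
              (convex_ball (0:ℂ) 1).isPreconnected isOpen_ball hφd hw hmax
            have h3 : z 0 = φ w := by
              rw [← hφi 0]
              exact heq (mem_ball_zero_iff.2 ha)
            apply ne_of_lt hb
            rw [h3, ← h]
        have hzlt : ∀ i, ‖z i‖ < 1 := fun i =>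
          hφi i ▸ hstrict (lam i) (mem_ball_zero_iff.2 (hmem i))
        have hφmaps : Set.MapsTo φ (ball (0:ℂ) 1) (ball (0:ℂ) 1) := fun w hw =>
          mem_ball_zero_iff.2 (hstrict w hw)
        have hbneg : ‖-lam 0‖ < 1 := by simpa using ha
        set φt : ℂ → ℂ := fun w => mob (z 0) (φ (mob (-(lam 0)) w)) with hφt
        have hmA : Set.MapsTo (mob (-(lam 0))) (ball (0:ℂ) 1) (ball (0:ℂ) 1) :=
          mob_mapsTo hbneg
        have hφtd : DifferentiableOn ℂ φt (ball (0:ℂ) 1) := by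
          have hinner : DifferentiableOn ℂ (fun w => φ (mob (-(lam 0)) w)) (ball (0:ℂ) 1) :=
            hφd.comp (mob_diffOn hbneg) hmA
          have hinmaps : Set.MapsTo (fun w => φ (mob (-(lam 0)) w)) (ball (0:ℂ) 1)
              (ball (0:ℂ) 1) := fun w hw => hφmaps (hmA hw)
          exact (mob_diffOn hb).comp hinner hinmaps
        have hφt0 : φt 0 = 0 := by
          rw [hφt]
          simp only
          rw [mob_zero, hφi 0, mob_self]
        have hφtmaps : Set.MapsTo φt (ball (0:ℂ) 1) (ball (0:ℂ) 1) := fun w hw =>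
          mem_ball_zero_iff.2 (norm_mob_lt hb (hstrict _ (hmA hw)))
        set χ : ℂ → ℂ := dslope φt 0 with hχ
        have hball0 : (ball (0:ℂ) 1) ∈ nhds (0:ℂ) := isOpen_ball.mem_nhds (mem_ball_self one_pos)
        have hχd : DifferentiableOn ℂ χ (ball (0:ℂ) 1) :=
          (Complex.differentiableOn_dslope hball0).2 hφtd
        have hχb : ∀ w ∈ ball (0:ℂ) 1, ‖χ w‖ ≤ 1 := by
          intro w hw
          have hmapsχ : Set.MapsTo φt (ball (0:ℂ) 1) (ball (φt 0) 1) := by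
            rw [hφt0]
            exact hφtmaps
          have h2 := Complex.norm_dslope_le_div_of_mapsTo_ball hφtd (hmapsχ.mono_right ball_subset_closedBall) hw
          simpa using h2
        have hμlt : ∀ i, ‖mob (lam 0) (lam i)‖ < 1 := fun i => norm_mob_lt ha (hmem i)
        have hca : ‖conj' (lam 0)‖ < 1 := by rw [hcnorm]; exact ha
        have hμne : ∀ i : Fin n, mob (lam 0) (lam i.succ) ≠ 0 := by
          intro i h
          rw [mob, div_eq_zero_iff] at h
          rcases h with h | h
          · exact Fin.succ_ne_zero i (hinj (by rwa [sub_eq_zero] at h))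
          · exact one_sub_mul_ne hca (hmem i.succ).le h
        have hinj' : Function.Injective (fun i : Fin n => mob (lam 0) (lam i.succ)) := by
          intro i j h
          have h2 := congrArg (mob (-(lam 0))) h
          simp only at h2
          rw [mob_mob ha (hmem i.succ), mob_mob ha (hmem j.succ)] at h2
          exact Fin.succ_injective n (hinj h2)
        have hχval : ∀ i : Fin n, χ (mob (lam 0) (lam i.succ))
            = mob (z 0) (z i.succ) / mob (lam 0) (lam i.succ) := by
          intro i
          rw [hχ, dslope_of_ne _ (hμne i), slope_def_field, hφt0, sub_zero, sub_zero, hφt]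
          simp only
          rw [mob_mob ha (hmem i.succ), hφi i.succ]
        have hNewP := (IH (fun i => mob (lam 0) (lam i.succ))
          (fun i => χ (mob (lam 0) (lam i.succ)))
          (fun i => hμlt i.succ) hinj').1 ⟨χ, hχd, fun i => rfl, hχb⟩
        set F : Matrix (Fin (n+1)) (Fin (n+1)) ℂ := Matrix.of fun i j =>
          (1 - mob (z 0) (z i) * conj' (mob (z 0) (z j))) /
          (1 - mob (lam 0) (lam i) * conj' (mob (lam 0) (lam j))) with hF
        have hμden : ∀ i j : Fin (n+1),
            (1:ℂ) - mob (lam 0) (lam i) * conj' (mob (lam 0) (lam j)) ≠ 0 := fun i j =>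
          one_sub_mul_ne (hμlt i) (by rw [hcnorm]; exact (hμlt j).le)
        have hEsub : ((Matrix.of fun i j : Fin (n+1) => F i j - 1).submatrix
            Fin.succ Fin.succ).PosSemidef := by
          refine psd_scale hNewP 1 zero_le_one (fun i => mob (lam 0) (lam i.succ)) _ ?_
          intro i j
          simp only [Matrix.submatrix_apply, Matrix.of_apply, hF]
          rw [hχval i, hχval j]
          rw [entry_step' (mob (lam 0) (lam i.succ)) (mob (lam 0) (lam j.succ))
            (mob (z 0) (z i.succ)) (mob (z 0) (z j.succ)) (hμne i) (hμne j)
            (hμden i.succ j.succ)]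
          push_cast
          ring
        have hE : (Matrix.of fun i j : Fin (n+1) => F i j - 1).PosSemidef := by
          refine psd_border ?_ ?_ hEsub
          · intro j
            simp only [Matrix.of_apply, hF, mob_self]
            simp
          · intro i
            simp only [Matrix.of_apply, hF, mob_self]
            simp
        have hFpsd : F.PosSemidef := by
          have heq : F = (Matrix.of fun i j : Fin (n+1) => F i j - 1)
              + (Matrix.of fun _ _ : Fin (n+1) => (1:ℂ)) := by
            ext i j
            simp
          rw [heq]
          exact hE.add psd_ones
        have hcb : ‖conj' (z 0)‖ < 1 := by rw [hcnorm]; exact hb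
        refine psd_scale hFpsd ((1 - normSq (lam 0)) / (1 - normSq (z 0)))
          (div_nonneg (hdlam 0).le hdz.le)
          (fun i => (1 - conj' (z 0) * z i) / (1 - conj' (lam 0) * lam i)) _ ?_
        intro i j
        simp only [Matrix.of_apply, hF]
        have hcast : (((1 - normSq (lam 0)) / (1 - normSq (z 0)) : ℝ) : ℂ)
            = (1 - lam 0 * conj' (lam 0)) / (1 - z 0 * conj' (z 0)) := by
          rw [Complex.ofReal_div, Complex.ofReal_sub, Complex.ofReal_sub, Complex.ofReal_one,
            Complex.mul_conj, Complex.mul_conj]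
        rw [hcast]
        exact entry_forward (lam 0) (z 0) (lam i) (lam j) (z i) (z j)
          (one_sub_mul_ne hca (hmem i).le) (one_sub_mul_ne hca (hmem j).le)
          (one_sub_mul_ne hcb (hzlt i).le) (one_sub_mul_ne hcb (hzlt j).le)
          (hden 0 0) (one_sub_mul_ne hb (by rw [hcnorm]; exact hb.le)) (hden i j)
      · intro hP
        have hdz : (0:ℝ) < 1 - normSq (z 0) := by
          have := normSq_lt_one hb
          linarith
        have hzlt : ∀ i, ‖z i‖ < 1 := by
          intro i
          have hdiag := psd_diag hP i
          simp only [Matrix.of_apply] at hdiag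
          rw [diag_real (z i) (lam i)] at hdiag
          have h00' : 0 ≤ (1 - normSq (z i)) / (1 - normSq (lam i)) :=
            Complex.zero_le_real.1 hdiag
          have hnum : 0 ≤ 1 - normSq (z i) := by
            have h2 := mul_nonneg h00' (hdlam i).le
            rwa [div_mul_cancel₀ _ (ne_of_gt (hdlam i))] at h2
          rcases lt_or_eq_of_le hnum with h | h
          · exact norm_lt_one_of_normSq (by linarith)
          · exfalso
            have hsq1 : normSq (z i) = 1 := by linarith
            have hdiag0 : (Matrix.of fun k l : Fin (n+1) =>
                (1 - z k * conj' (z l)) / (1 - lam k * conj' (lam l))) i i = 0 := by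
              simp only [Matrix.of_apply]
              rw [diag_real (z i) (lam i), hsq1]
              simp
            have hrow := psd_row hP hdiag0 0
            simp only [Matrix.of_apply] at hrow
            have h1 : (1:ℂ) - z i * conj' (z 0) = 0 := by
              rcases div_eq_zero_iff.1 hrow with h3 | h3
              · exact h3
              · exact absurd h3 (hden i 0)
            have h2 : z i * conj' (z 0) = 1 := by linear_combination -h1
            have h4 := congrArg norm h2
            rw [norm_mul, hcnorm, norm_eq_one_of_normSq hsq1, one_mul, norm_one] at h4
            rw [h4] at hb
            exact lt_irrefl _ hb
        have hcb : ‖conj' (z 0)‖ < 1 := by rw [hcnorm]; exact hb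
        have hca : ‖conj' (lam 0)‖ < 1 := by rw [hcnorm]; exact ha
        have hμlt : ∀ i, ‖mob (lam 0) (lam i)‖ < 1 := fun i => norm_mob_lt ha (hmem i)
        have hμne : ∀ i : Fin n, mob (lam 0) (lam i.succ) ≠ 0 := by
          intro i h
          rw [mob, div_eq_zero_iff] at h
          rcases h with h | h
          · exact Fin.succ_ne_zero i (hinj (by rwa [sub_eq_zero] at h))
          · exact one_sub_mul_ne hca (hmem i.succ).le h
        have hinj' : Function.Injective (fun i : Fin n => mob (lam 0) (lam i.succ)) := by
          intro i j h
          have h2 := congrArg (mob (-(lam 0))) h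
          simp only at h2
          rw [mob_mob ha (hmem i.succ), mob_mob ha (hmem j.succ)] at h2
          exact Fin.succ_injective n (hinj h2)
        have hμden : ∀ i j : Fin (n+1),
            (1:ℂ) - mob (lam 0) (lam i) * conj' (mob (lam 0) (lam j)) ≠ 0 := fun i j =>
          one_sub_mul_ne (hμlt i) (by rw [hcnorm]; exact (hμlt j).le)
        set F : Matrix (Fin (n+1)) (Fin (n+1)) ℂ := Matrix.of fun i j =>
          (1 - mob (z 0) (z i) * conj' (mob (z 0) (z j))) /
          (1 - mob (lam 0) (lam i) * conj' (mob (lam 0) (lam j))) with hF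
        have hFpsd : F.PosSemidef := by
          refine psd_scale hP ((1 - normSq (z 0)) / (1 - normSq (lam 0)))
            (div_nonneg hdz.le (hdlam 0).le)
            (fun i => (1 - conj' (lam 0) * lam i) / (1 - conj' (z 0) * z i)) _ ?_
          intro i j
          simp only [Matrix.of_apply, hF]
          have hcast : (((1 - normSq (z 0)) / (1 - normSq (lam 0)) : ℝ) : ℂ)
              = (1 - z 0 * conj' (z 0)) / (1 - lam 0 * conj' (lam 0)) := by
            rw [Complex.ofReal_div, Complex.ofReal_sub, Complex.ofReal_sub, Complex.ofReal_one,
              Complex.mul_conj, Complex.mul_conj]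
          rw [hcast]
          exact entry_reverse (lam 0) (z 0) (lam i) (lam j) (z i) (z j)
            (one_sub_mul_ne hca (hmem i).le) (one_sub_mul_ne hca (hmem j).le)
            (one_sub_mul_ne hcb (hzlt i).le) (one_sub_mul_ne hcb (hzlt j).le)
            (hden 0 0) (one_sub_mul_ne hb (by rw [hcnorm]; exact hb.le)) (hden i j)
        have hrow1 : ∀ j, F 0 j = 1 := by
          intro j
          simp only [Matrix.of_apply, hF, mob_self]
          simp
        have hEsub := (psd_subones hFpsd hrow1).submatrix Fin.succ
        have hNewP : (Matrix.of fun i j : Fin n =>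
            (1 - (mob (z 0) (z i.succ) / mob (lam 0) (lam i.succ)) *
              conj' (mob (z 0) (z j.succ) / mob (lam 0) (lam j.succ))) /
            (1 - mob (lam 0) (lam i.succ) * conj' (mob (lam 0) (lam j.succ)))).PosSemidef := by
          refine psd_scale hEsub 1 zero_le_one (fun i => (mob (lam 0) (lam i.succ))⁻¹) _ ?_
          intro i j
          simp only [Matrix.of_apply, Matrix.submatrix_apply, hF]
          rw [entry_step (mob (lam 0) (lam i.succ)) (mob (lam 0) (lam j.succ))
            (mob (z 0) (z i.succ)) (mob (z 0) (z j.succ)) (hμne i) (hμne j)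
            (hμden i.succ j.succ)]
          push_cast
          ring
        obtain ⟨χ, hχd, hχv, hχb⟩ := (IH (fun i => mob (lam 0) (lam i.succ))
          (fun i => mob (z 0) (z i.succ) / mob (lam 0) (lam i.succ))
          (fun i => hμlt i.succ) hinj').2 hNewP
        have hbneg : ‖-(z 0)‖ < 1 := by simpa using hb
        have hgd : DifferentiableOn ℂ (fun u => mob (lam 0) u * χ (mob (lam 0) u))
            (ball (0:ℂ) 1) := by
          have h1 : DifferentiableOn ℂ (fun u => χ (mob (lam 0) u)) (ball (0:ℂ) 1) :=
            hχd.comp (mob_diffOn ha) (mob_mapsTo ha)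
          exact (mob_diffOn ha).mul h1
        have hgmaps : Set.MapsTo (fun u => mob (lam 0) u * χ (mob (lam 0) u)) (ball (0:ℂ) 1)
            (ball (0:ℂ) 1) := by
          intro u hu
          have h1 : ‖mob (lam 0) u‖ < 1 := norm_mob_lt ha (mem_ball_zero_iff.1 hu)
          have h2 : ‖χ (mob (lam 0) u)‖ ≤ 1 := hχb _ (mem_ball_zero_iff.2 h1)
          apply mem_ball_zero_iff.2
          rw [norm_mul]
          calc ‖mob (lam 0) u‖ * ‖χ (mob (lam 0) u)‖ ≤ ‖mob (lam 0) u‖ * 1 :=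
                mul_le_mul_of_nonneg_left h2 (norm_nonneg _)
            _ < 1 := by rw [mul_one]; exact h1
        refine ⟨fun u => mob (-(z 0)) (mob (lam 0) u * χ (mob (lam 0) u)), ?_, ?_, ?_⟩
        · exact (mob_diffOn hbneg).comp hgd hgmaps
        · intro i
          induction i using Fin.cases with
          | zero =>
            simp only
            rw [mob_self, zero_mul, mob_zero]
          | succ i' =>
            simp only
            rw [hχv i', mul_div_cancel₀ _ (hμne i')]
            exact mob_mob hb (hzlt i'.succ)
        · intro w hw
          exact (norm_mob_lt hbneg (mem_ball_zero_iff.1 (hgmaps hw))).le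
    · -- degenerate case : ‖z 0‖ ≥ 1
      constructor
      · rintro ⟨φ, hφd, hφi, hφb⟩
        have hb1 : ‖z 0‖ = 1 := le_antisymm (hφi 0 ▸ hφb (lam 0) (mem_ball_zero_iff.2 ha))
          (not_lt.1 hb)
        have hmax : IsMaxOn (norm ∘ φ) (ball (0:ℂ) 1) (lam 0) := by
          intro w hw
          have : ‖φ w‖ ≤ 1 := hφb w hw
          simpa [hφi 0, hb1] using this
        have heq := Complex.eqOn_of_isPreconnected_of_isMaxOn_norm
          (convex_ball (0:ℂ) 1).isPreconnected isOpen_ball hφd (mem_ball_zero_iff.2 ha) hmax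
        have hz : ∀ i, z i = z 0 := by
          intro i
          rw [← hφi i, ← hφi 0]
          exact heq (mem_ball_zero_iff.2 (hmem i))
        have hnum : (1:ℂ) - z 0 * conj' (z 0) = 0 := by
          rw [Complex.mul_conj]
          rw [show normSq (z 0) = 1 by
            have := congrArg (fun t : ℝ => t^2) hb1
            simpa [Complex.sq_norm] using this]
          simp
        have hP0 : (Matrix.of fun i j : Fin (n+1) =>
            (1 - z i * conj' (z j)) / (1 - lam i * conj' (lam j))) = 0 := by
          ext i j
          simp only [Matrix.of_apply, Matrix.zero_apply]
          rw [hz i, hz j, hnum, zero_div]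
        rw [hP0]
        exact Matrix.PosSemidef.zero
      · intro hP
        have h00 := psd_diag hP 0
        simp only [Matrix.of_apply] at h00
        rw [diag_real (z 0) (lam 0)] at h00
        have h00' : 0 ≤ (1 - normSq (z 0)) / (1 - normSq (lam 0)) := Complex.zero_le_real.1 h00
        have hle : normSq (z 0) ≤ 1 := by
          have h2 := mul_nonneg h00' (hdlam 0).le
          rw [div_mul_cancel₀ _ (ne_of_gt (hdlam 0))] at h2
          linarith
        have hge : (1:ℝ) ≤ normSq (z 0) := by
          have h2 : (1:ℝ) ≤ ‖z 0‖ := not_lt.1 hb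
          rw [← Complex.sq_norm]
          nlinarith
        have hsq1 : normSq (z 0) = 1 := le_antisymm hle (by linarith)
        have hz0ne : z 0 ≠ 0 := by
          intro h
          rw [h] at hsq1
          simp at hsq1
        have hdiag0 : (Matrix.of fun i j : Fin (n+1) =>
            (1 - z i * conj' (z j)) / (1 - lam i * conj' (lam j))) 0 0 = 0 := by
          simp only [Matrix.of_apply]
          rw [diag_real (z 0) (lam 0), hsq1]
          simp
        have hrow := fun j => psd_row hP hdiag0 j
        have hz : ∀ j, z j = z 0 := by
          intro j
          have h1 : (1:ℂ) - z 0 * conj' (z j) = 0 := by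
            have h2 := hrow j
            simp only [Matrix.of_apply] at h2
            rcases div_eq_zero_iff.1 h2 with h3 | h3
            · exact h3
            · exact absurd h3 (hden 0 j)
          have h5 : z 0 * conj' (z 0) = 1 := by
            rw [Complex.mul_conj, hsq1]
            simp
          have h4 : z 0 * conj' (z j) = z 0 * conj' (z 0) := by
            linear_combination -h1 - h5
          exact (starRingEnd ℂ).injective (mul_left_cancel₀ hz0ne h4)
        refine ⟨fun _ => z 0, differentiableOn_const _, fun i => (hz i).symm, fun w _ => ?_⟩
        have : ‖z 0‖ = 1 := by
          rw [← Complex.sq_norm] at hsq1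
          have h := norm_nonneg (z 0)
          nlinarith
        rw [this]

end NPick


/-- **Nevanlinna–Pick theorem.** There is a holomorphic function `φ` on the unit disc,
bounded by 1, with `φ (λ i) = z i` for each `i`, iff the Pick matrix
`[(1 - zᵢ conj zⱼ)/(1 - λᵢ conj λⱼ)]` is positive semidefinite. -/
theorem stmt0 (n : ℕ) (hn : 0 < n) (lam : Fin n → ℂ)
    (hmem : ∀ i, lam i ∈ ball (0 : ℂ) 1) (hinj : Function.Injective lam)
    (z : Fin n → ℂ) :
    (∃ φ : ℂ → ℂ, DifferentiableOn ℂ φ (ball (0 : ℂ) 1) ∧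
      (∀ i, φ (lam i) = z i) ∧ (∀ w ∈ ball (0 : ℂ) 1, ‖φ w‖ ≤ 1)) ↔
    (Matrix.of fun i j : Fin n =>
      (1 - z i * (starRingEnd ℂ) (z j)) / (1 - lam i * (starRingEnd ℂ) (lam j))).PosSemidef := by
  exact NPick.key n lam z (fun i => mem_ball_zero_iff.1 (hmem i)) hinj
end

section
/- Let L(t) = Σ_{p≥0} t^p/(p+1) for t in the open unit disc 𝔻 (so L(t) = −log(1−t)/t for t ≠ 0 and L(0) = 1, the Dirichlet kernel function). Then there exists a sequence (a_p)_{p≥1} of strictly positive real numbers such that the power series Σ_{p≥1} a_p t^p converges for every t ∈ 𝔻 and L(t)·(1 − Σ_{p≥1} a_p t^p) = 1 for all t ∈ 𝔻. Equivalently, the reciprocal 1/L is holomorphic on 𝔻 and its Taylor coefficients at 0 satisfy: the constant term is 1 and the coefficient of t^p is strictly negative for every p ≥ 1. -/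
open Complex Metric

open Finset


noncomputable def dcc : ℕ → ℝ := fun n => 1 / (n + 1)

noncomputable def dbb : ℕ → ℝ
  | 0 => 1
  | n + 1 => -∑ k : Fin (n + 1), dbb k * dcc (n + 1 - k)

lemma dcc_pos (n : ℕ) : 0 < dcc n := by
  have : (0:ℝ) < (n:ℝ) + 1 := by positivity
  simpa [dcc] using this

lemma dcc_mono {m n : ℕ} (h : m ≤ n) : dcc n ≤ dcc m := by
  unfold dcc
  apply one_div_le_one_div_of_le (by positivity)
  have : (m:ℝ) ≤ n := by exact_mod_cast h
  linarith

lemma dbb_succ (n : ℕ) :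
    dbb (n + 1) = -∑ k ∈ range (n + 1), dbb k * dcc (n + 1 - k) := by
  rw [dbb, Fin.sum_univ_eq_sum_range (fun k => dbb k * dcc (n + 1 - k))]

lemma dconv (n : ℕ) :
    ∑ k ∈ range (n + 1), dbb k * dcc (n - k) = if n = 0 then 1 else 0 := by
  cases n with
  | zero => simp [dbb, dcc]
  | succ m =>
    rw [Finset.sum_range_succ]
    simp only [Nat.sub_self, Nat.succ_ne_zero, if_false]
    rw [dbb_succ]
    have : dcc 0 = 1 := by norm_num [dcc]
    rw [this]
    ring

lemma dbb_neg : ∀ n, dbb (n + 1) < 0 := by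
  intro n
  induction n using Nat.strong_induction_on with
  | _ n IH =>
    cases n with
    | zero =>
      have : dbb 1 = -(dbb 0 * dcc 1) := by
        rw [dbb_succ]; simp
      rw [this]
      norm_num [dbb, dcc]
    | succ m =>
      set lam : ℝ := dcc (m + 2) / dcc (m + 1) with hlam
      have key : dbb (m + 2)
          = ∑ k ∈ range (m + 2), dbb k * (lam * dcc (m + 1 - k) - dcc (m + 2 - k)) := by
        have h1 := dconv (m + 1)
        rw [if_neg (Nat.succ_ne_zero m)] at h1
        have h2 : ∑ k ∈ range (m + 2), dbb k * (lam * dcc (m + 1 - k) - dcc (m + 2 - k))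
            = lam * (∑ k ∈ range (m + 2), dbb k * dcc (m + 1 - k))
              - ∑ k ∈ range (m + 2), dbb k * dcc (m + 2 - k) := by
          rw [Finset.mul_sum, ← Finset.sum_sub_distrib]
          exact Finset.sum_congr rfl fun k _ => by ring
        rw [dbb_succ (m + 1), h2, h1, mul_zero, zero_sub]
      rw [key]
      have hfac : ∀ k, 1 ≤ k → k ≤ m + 1 → 0 < lam * dcc (m + 1 - k) - dcc (m + 2 - k) := by
        intro k hk1 hkle
        obtain ⟨j, hj⟩ := Nat.exists_eq_add_of_le hkle
        have hsub1 : m + 1 - k = j := by omega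
        have hsub2 : m + 2 - k = j + 1 := by omega
        have hjm : j ≤ m := by omega
        rw [hsub1, hsub2, hlam]
        unfold dcc
        have hjm' : (j:ℝ) ≤ m := by exact_mod_cast hjm
        push_cast
        have e1 : (1:ℝ) / (↑m + 2 + 1) / (1 / (↑m + 1 + 1)) * (1 / (↑j + 1)) - 1 / (↑j + 1 + 1)
            = ((m:ℝ) - j + 1) / (((m:ℝ) + 3) * (((j:ℝ) + 1) * ((j:ℝ) + 2))) := by
          field_simp
          ring
        rw [e1]
        apply div_pos (by linarith) (by positivity)
      have hterm : ∀ k ∈ range (m + 2),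
          dbb k * (lam * dcc (m + 1 - k) - dcc (m + 2 - k)) ≤ (0:ℝ) := by
        intro k hk
        rcases Nat.eq_zero_or_pos k with rfl | hk1
        · have h0 : lam * dcc (m + 1) - dcc (m + 2) = 0 := by
            rw [hlam, div_mul_cancel₀ _ (dcc_pos (m + 1)).ne', sub_self]
          simp [h0]
        · have hkle : k ≤ m + 1 := by
            simp only [Finset.mem_range] at hk; omega
          have hbk : dbb k < 0 := by
            have hk' : k - 1 + 1 = k := by omega
            rw [← hk']
            exact IH (k - 1) (by omega)
          exact le_of_lt (mul_neg_of_neg_of_pos hbk (hfac k hk1 hkle))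
      have hwit : dbb 1 * (lam * dcc (m + 1 - 1) - dcc (m + 2 - 1)) < 0 :=
        mul_neg_of_neg_of_pos (IH 0 (by omega)) (hfac 1 le_rfl (by omega))
      calc ∑ k ∈ range (m + 2), dbb k * (lam * dcc (m + 1 - k) - dcc (m + 2 - k))
          < ∑ _k ∈ range (m + 2), (0:ℝ) :=
            Finset.sum_lt_sum hterm ⟨1, Finset.mem_range.mpr (by omega), hwit⟩
        _ = 0 := by simp

lemma dbb_sum_le (n : ℕ) : ∑ k ∈ range n, (-dbb (k + 1)) ≤ 1 := by
  cases n with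
  | zero => simp
  | succ m =>
    have h1 := dconv (m + 1)
    rw [if_neg (Nat.succ_ne_zero m), Finset.sum_range_succ'] at h1
    have hb0 : dbb 0 = 1 := by rw [dbb]
    simp only [Nat.succ_sub_succ, Nat.sub_zero, hb0, one_mul] at h1
    have h2 : ∑ k ∈ range (m + 1), (-dbb (k + 1)) * dcc (m - k) = dcc (m + 1) := by
      have : ∑ k ∈ range (m + 1), (-dbb (k + 1)) * dcc (m - k)
          = -∑ k ∈ range (m + 1), dbb (k + 1) * dcc (m - k) := by
        rw [← Finset.sum_neg_distrib]
        exact Finset.sum_congr rfl fun k _ => by ring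
      rw [this]
      linarith
    have h3 : dcc (m + 1) * ∑ k ∈ range (m + 1), (-dbb (k + 1)) ≤ dcc (m + 1) := by
      rw [Finset.mul_sum]
      rw [← h2]
      apply Finset.sum_le_sum
      intro k hk
      have hpos : 0 < -dbb (k + 1) := by have := dbb_neg k; linarith
      have : dcc (m + 1) ≤ dcc (m - k) := dcc_mono (by omega)
      nlinarith
    have := dcc_pos (m + 1)
    nlinarith

lemma summable_neg_dbb : Summable (fun p : ℕ => -dbb (p + 1)) :=
  summable_of_sum_range_le (fun n => by have := dbb_neg n; linarith) dbb_sum_le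


/-- The reciprocal of the Dirichlet kernel function `L(t) = Σ_{p≥0} t^p/(p+1)` has the
form `1/L(t) = 1 - Σ_{p≥1} a_p t^p` with all `a_p > 0`, the series converging on 𝔻. -/
theorem stmt4 :
    ∃ a : ℕ → ℝ, (∀ p, 0 < a p) ∧
      ∀ t ∈ ball (0 : ℂ) 1, ∃ s : ℂ,
        HasSum (fun p : ℕ => (a p : ℂ) * t ^ (p + 1)) s ∧
        (∑' p : ℕ, t ^ p / ((p : ℂ) + 1)) * (1 - s) = 1 := by
  refine ⟨fun p => -dbb (p + 1), fun p => by simpa using neg_pos.mpr (dbb_neg p), ?_⟩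
  intro t ht
  rw [mem_ball_zero_iff] at ht
  set F : ℕ → ℂ := fun p => t ^ p / ((p : ℂ) + 1) with hF
  set G : ℕ → ℂ := fun p => (dbb p : ℂ) * t ^ p with hG
  -- summability of |dbb|
  have habs : Summable (fun p : ℕ => |dbb p|) := by
    apply (summable_nat_add_iff 1).1
    have : (fun n : ℕ => |dbb (n + 1)|) = fun n : ℕ => -dbb (n + 1) := by
      funext n; exact abs_of_neg (dbb_neg n)
    rw [this]; exact summable_neg_dbb
  have hGn : Summable (fun p : ℕ => ‖G p‖) := by
    apply Summable.of_nonneg_of_le (fun p => norm_nonneg _) (fun p => ?_) habs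
    have : ‖G p‖ = |dbb p| * ‖t‖ ^ p := by
      simp [hG, norm_mul, norm_pow, Complex.norm_real]
    rw [this]
    calc |dbb p| * ‖t‖ ^ p ≤ |dbb p| * 1 := by
          apply mul_le_mul_of_nonneg_left _ (abs_nonneg _)
          exact pow_le_one₀ (norm_nonneg t) (le_of_lt ht)
      _ = |dbb p| := mul_one _
  have hFn : Summable (fun p : ℕ => ‖F p‖) := by
    apply Summable.of_nonneg_of_le (fun p => norm_nonneg _) (fun p => ?_)
      (summable_geometric_of_lt_one (norm_nonneg t) ht)
    have hcast : ((p : ℂ) + 1) = ((p + 1 : ℝ) : ℂ) := by push_cast; ring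
    simp only [hF]
    rw [norm_div, norm_pow]
    apply div_le_self (by positivity)
    rw [hcast, Complex.norm_real, Real.norm_eq_abs]
    rw [abs_of_pos (show (0:ℝ) < (p:ℝ) + 1 by positivity)]
    linarith [Nat.cast_nonneg (α := ℝ) p]
  have hGs : Summable G := hGn.of_norm
  have hs : Summable (fun p : ℕ => ((-dbb (p + 1) : ℝ) : ℂ) * t ^ (p + 1)) := by
    have h1 : Summable (fun p : ℕ => G (p + 1)) := (summable_nat_add_iff 1).2 hGs
    have : (fun p : ℕ => ((-dbb (p + 1) : ℝ) : ℂ) * t ^ (p + 1))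
        = fun p : ℕ => -(G (p + 1)) := by
      funext p; simp only [hG]; push_cast; ring
    rw [this]
    exact h1.neg
  refine ⟨∑' p, ((-dbb (p + 1) : ℝ) : ℂ) * t ^ (p + 1), hs.hasSum, ?_⟩
  -- 1 - s = ∑' G
  have h1s : 1 - ∑' p, ((-dbb (p + 1) : ℝ) : ℂ) * t ^ (p + 1) = ∑' p, G p := by
    rw [Summable.tsum_eq_zero_add hGs]
    have hG0 : G 0 = 1 := by simp [hG, show dbb 0 = 1 from by rw [dbb]]
    rw [hG0]
    have : (fun p : ℕ => ((-dbb (p + 1) : ℝ) : ℂ) * t ^ (p + 1))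
        = fun p : ℕ => -(G (p + 1)) := by
      funext p; simp only [hG]; push_cast; ring
    rw [this, tsum_neg]
    ring
  rw [h1s]
  -- Cauchy product
  rw [tsum_mul_tsum_eq_tsum_sum_antidiagonal_of_summable_norm hFn hGn]
  have inner : ∀ n : ℕ, ∑ kl ∈ Finset.HasAntidiagonal.antidiagonal n, F kl.1 * G kl.2
      = (if n = 0 then (1 : ℂ) else 0) * t ^ n := by
    intro n
    rw [Finset.Nat.sum_antidiagonal_eq_sum_range_succ_mk]
    have step : ∀ k ∈ range (n + 1),
        F k * G (n - k) = ((dcc k * dbb (n - k) : ℝ) : ℂ) * t ^ n := by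
      intro k hk
      have hk' : k ≤ n := by simp only [Finset.mem_range] at hk; omega
      have hpow : t ^ k * t ^ (n - k) = t ^ n := by
        rw [← pow_add]; congr 1; omega
      simp only [hF, hG, dcc]
      push_cast
      rw [← hpow]
      ring
    rw [Finset.sum_congr rfl step, ← Finset.sum_mul, ← Complex.ofReal_sum]
    have hre : ∑ k ∈ range (n + 1), dcc k * dbb (n - k) = if n = 0 then (1:ℝ) else 0 := by
      rw [← dconv n, ← Finset.sum_range_reflect (fun k => dbb k * dcc (n - k)) (n + 1)]
      apply Finset.sum_congr rfl
      intro j hj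
      have hj' : j ≤ n := by simp only [Finset.mem_range] at hj; omega
      have e1 : n + 1 - 1 - j = n - j := by omega
      have e2 : n - (n - j) = j := by omega
      rw [e1, e2, mul_comm]
    rw [hre]
    split_ifs <;> simp
  rw [tsum_congr inner, tsum_eq_single 0 (fun b hb => by simp [hb])]
  simp
end

section
/- Let d be a positive integer, B the open unit ball of ℂ^d, λ₁, …, λₙ distinct points of B, and z₁, …, zₙ ∈ ℂ. If the n×n matrix whose (i,j) entry is (1 − zᵢ·conj(zⱼ))·(1 − ⟨λᵢ,λⱼ⟩)^{-1} is positive semidefinite, then there exists a holomorphic function φ : B → ℂ with sup_{w∈B} |φ(w)| ≤ 1 and φ(λᵢ) = zᵢ for each i. -/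
open Complex Metric
open scoped ComplexOrder InnerProductSpace

noncomputable section Stmt8Aux

/-- Generic lurking isometry extension: equal Gram matrices give a linear contraction
matching the vectors. -/
theorem stmt8_exists_contraction {n : ℕ} {H1 H2 : Type*}
    [NormedAddCommGroup H1] [InnerProductSpace ℂ H1]
    [NormedAddCommGroup H2] [InnerProductSpace ℂ H2]
    (x : Fin n → H1) (y : Fin n → H2)
    (h : ∀ i j, ⟪x i, x j⟫_ℂ = ⟪y i, y j⟫_ℂ) :
    ∃ T : H1 →ₗ[ℂ] H2, (∀ u, ‖T u‖ ≤ ‖u‖) ∧ ∀ i, T (x i) = y i := by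
  classical
  let L : (Fin n → ℂ) →ₗ[ℂ] H1 :=
    { toFun := fun c => ∑ i, c i • x i
      map_add' := by intro c c'; simp [add_smul, Finset.sum_add_distrib]
      map_smul' := by intro t c; simp [smul_smul, Finset.smul_sum]
      }
  let L' : (Fin n → ℂ) →ₗ[ℂ] H2 :=
    { toFun := fun c => ∑ i, c i • y i
      map_add' := by intro c c'; simp [add_smul, Finset.sum_add_distrib]
      map_smul' := by intro t c; simp [smul_smul, Finset.smul_sum]
      }
  have hL : ∀ c, L c = ∑ i, c i • x i := fun _ => rfl
  have hL' : ∀ c, L' c = ∑ i, c i • y i := fun _ => rfl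
  have hgram : ∀ c, ⟪L c, L c⟫_ℂ = ⟪L' c, L' c⟫_ℂ := by
    intro c
    rw [hL, hL', sum_inner, sum_inner]
    refine Finset.sum_congr rfl fun i _ => ?_
    rw [inner_sum, inner_sum]
    refine Finset.sum_congr rfl fun j _ => ?_
    rw [inner_smul_left, inner_smul_left, inner_smul_right, inner_smul_right, h i j]
  have hnorm : ∀ c, ‖L' c‖ = ‖L c‖ := by
    intro c
    have h1 := hgram c
    rw [inner_self_eq_norm_sq_to_K, inner_self_eq_norm_sq_to_K] at h1
    have h2 : (‖L c‖ : ℝ) ^ 2 = ‖L' c‖ ^ 2 := by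
      exact_mod_cast h1
    nlinarith [norm_nonneg (L c), norm_nonneg (L' c)]
  have hker : LinearMap.ker L ≤ LinearMap.ker L' := by
    intro c hc
    rw [LinearMap.mem_ker] at hc ⊢
    have := hnorm c
    rw [hc, norm_zero] at this
    exact norm_eq_zero.mp this
  set M := LinearMap.range L with hM
  haveI : FiniteDimensional ℂ M := Module.Finite.range L
  haveI : CompleteSpace M := FiniteDimensional.complete ℂ M
  let T0 : M →ₗ[ℂ] H2 :=
    ((LinearMap.ker L).liftQ L' hker) ∘ₗ (L.quotKerEquivRange.symm : M →ₗ[ℂ] _)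
  have hT0 : ∀ c, T0 ⟨L c, LinearMap.mem_range_self L c⟩ = L' c := by
    intro c
    show ((LinearMap.ker L).liftQ L' hker)
      (L.quotKerEquivRange.symm ⟨L c, LinearMap.mem_range_self L c⟩) = L' c
    rw [L.quotKerEquivRange_symm_apply_image c (LinearMap.mem_range_self L c)]
    simp [Submodule.mkQ_apply]
  have hT0norm : ∀ u : M, ‖T0 u‖ = ‖(u : H1)‖ := by
    rintro ⟨-, c, rfl⟩
    rw [hT0 c]
    exact hnorm c
  refine ⟨T0 ∘ₗ (M.orthogonalProjectionOnto).toLinearMap, ?_, ?_⟩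
  · intro u
    have h1 : ‖T0 (M.orthogonalProjectionOnto u)‖ = ‖((M.orthogonalProjectionOnto u : M) : H1)‖ :=
      hT0norm _
    have h2 : ‖((M.orthogonalProjectionOnto u : M) : H1)‖ ≤ ‖u‖ := by
      have := (M.orthogonalProjectionOnto).le_opNorm u
      calc ‖((M.orthogonalProjectionOnto u : M) : H1)‖ = ‖M.orthogonalProjectionOnto u‖ := rfl
        _ ≤ ‖M.orthogonalProjectionOnto‖ * ‖u‖ := this
        _ ≤ 1 * ‖u‖ := by
            exact mul_le_mul_of_nonneg_right M.orthogonalProjectionOnto_norm_le (norm_nonneg u)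
        _ = ‖u‖ := one_mul _
    calc ‖(T0 ∘ₗ (M.orthogonalProjectionOnto).toLinearMap) u‖
        = ‖T0 (M.orthogonalProjectionOnto u)‖ := rfl
      _ ≤ ‖u‖ := h1 ▸ h2
  · intro i
    have hxi : x i = L (Pi.single i 1) := by
      rw [hL]
      simp [Pi.single_apply, ite_smul]
    have hyi : y i = L' (Pi.single i 1) := by
      rw [hL']
      simp [Pi.single_apply, ite_smul]
    have hmem : x i ∈ M := hxi ▸ LinearMap.mem_range_self L _
    have hproj : M.orthogonalProjectionOnto (x i) = ⟨x i, hmem⟩ :=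
      Submodule.orthogonalProjectionOnto_mem_subspace_eq_self (⟨x i, hmem⟩ : M)
    calc (T0 ∘ₗ (M.orthogonalProjectionOnto).toLinearMap) (x i)
        = T0 (M.orthogonalProjectionOnto (x i)) := rfl
      _ = T0 ⟨x i, hmem⟩ := by rw [hproj]
      _ = T0 ⟨L (Pi.single i 1), LinearMap.mem_range_self L _⟩ := by
          congr 1; exact Subtype.ext hxi
      _ = L' (Pi.single i 1) := hT0 _
      _ = y i := hyi.symm

end Stmt8Aux

noncomputable section Stmt8Aux2

variable (d n : ℕ)

/-- The bilinear "tensor" map `(w, x) ↦ w ⊗ x`. -/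
def stmt8Ebil : EuclideanSpace ℂ (Fin d) →ₗ[ℂ]
    EuclideanSpace ℂ (Fin n) →ₗ[ℂ] EuclideanSpace ℂ (Fin d × Fin n) where
  toFun w :=
    { toFun := fun x => WithLp.toLp 2 (fun p : Fin d × Fin n => w p.1 * x p.2)
      map_add' := fun x y => PiLp.ext fun p => by
        show w p.1 * (x + y) p.2 = w p.1 * x p.2 + w p.1 * y p.2
        simp [PiLp.add_apply, mul_add]
      map_smul' := fun t x => PiLp.ext fun p => by
        show w p.1 * (t • x) p.2 = t * (w p.1 * x p.2)
        simp [PiLp.smul_apply, smul_eq_mul]; ring }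
  map_add' w w' := by
    refine LinearMap.ext fun x => PiLp.ext fun p => ?_
    show (w + w') p.1 * x p.2 = w p.1 * x p.2 + w' p.1 * x p.2
    simp [PiLp.add_apply, add_mul]
  map_smul' t w := by
    refine LinearMap.ext fun x => PiLp.ext fun p => ?_
    show (t • w) p.1 * x p.2 = t * (w p.1 * x p.2)
    simp [PiLp.smul_apply, smul_eq_mul]; ring

@[simp] lemma stmt8Ebil_apply (w : EuclideanSpace ℂ (Fin d)) (x : EuclideanSpace ℂ (Fin n))
    (p : Fin d × Fin n) : stmt8Ebil d n w x p = w p.1 * x p.2 := rfl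

lemma stmt8Ebil_norm (w : EuclideanSpace ℂ (Fin d)) (x : EuclideanSpace ℂ (Fin n)) :
    ‖stmt8Ebil d n w x‖ = ‖w‖ * ‖x‖ := by
  have h1 : ‖stmt8Ebil d n w x‖ ^ 2 = (‖w‖ * ‖x‖) ^ 2 := by
    rw [EuclideanSpace.norm_eq, EuclideanSpace.norm_eq (x := w), EuclideanSpace.norm_eq (x := x)]
    rw [Real.sq_sqrt (by positivity), mul_pow, Real.sq_sqrt (by positivity),
      Real.sq_sqrt (by positivity)]
    rw [Fintype.sum_prod_type, Finset.sum_mul_sum]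
    simp [mul_pow, norm_mul]
  nlinarith [norm_nonneg (stmt8Ebil d n w x), norm_nonneg w, norm_nonneg x,
    mul_nonneg (norm_nonneg w) (norm_nonneg x)]

lemma stmt8_prod_norm_sq {α β : Type*} [NormedAddCommGroup α] [NormedAddCommGroup β]
    (u : WithLp 2 (α × β)) : ‖u‖ ^ 2 = ‖u.fst‖ ^ 2 + ‖u.snd‖ ^ 2 :=
  WithLp.prod_norm_sq_eq_of_L2 u

/-- Pair constructors pinned to the `WithLp 2` type. -/
def stmt8mk (t : ℂ) (m : EuclideanSpace ℂ (Fin d × Fin n)) :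
    WithLp 2 (ℂ × EuclideanSpace ℂ (Fin d × Fin n)) := WithLp.toLp 2 (t, m)

def stmt8mk2 (t : ℂ) (m : EuclideanSpace ℂ (Fin n)) :
    WithLp 2 (ℂ × EuclideanSpace ℂ (Fin n)) := WithLp.toLp 2 (t, m)

@[simp] lemma stmt8mk_fst (t : ℂ) (m : EuclideanSpace ℂ (Fin d × Fin n)) :
    (stmt8mk d n t m).fst = t := rfl
@[simp] lemma stmt8mk_snd (t : ℂ) (m : EuclideanSpace ℂ (Fin d × Fin n)) :
    (stmt8mk d n t m).snd = m := rfl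
@[simp] lemma stmt8mk2_fst (t : ℂ) (m : EuclideanSpace ℂ (Fin n)) :
    (stmt8mk2 n t m).fst = t := rfl
@[simp] lemma stmt8mk2_snd (t : ℂ) (m : EuclideanSpace ℂ (Fin n)) :
    (stmt8mk2 n t m).snd = m := rfl

variable (T : WithLp 2 (ℂ × EuclideanSpace ℂ (Fin d × Fin n)) →ₗ[ℂ]
    WithLp 2 (ℂ × EuclideanSpace ℂ (Fin n)))

def stmt8a : ℂ := (T (stmt8mk d n 1 0)).fst

def stmt8C : EuclideanSpace ℂ (Fin n) := (T (stmt8mk d n 1 0)).snd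

def stmt8B : EuclideanSpace ℂ (Fin d × Fin n) →ₗ[ℂ] ℂ :=
  (LinearMap.fst ℂ ℂ _) ∘ₗ (WithLp.linearEquiv 2 ℂ _).toLinearMap ∘ₗ T
    ∘ₗ (WithLp.linearEquiv 2 ℂ (ℂ × EuclideanSpace ℂ (Fin d × Fin n))).symm.toLinearMap
    ∘ₗ (LinearMap.inr ℂ ℂ _)

def stmt8D : EuclideanSpace ℂ (Fin d × Fin n) →ₗ[ℂ] EuclideanSpace ℂ (Fin n) :=
  (LinearMap.snd ℂ ℂ _) ∘ₗ (WithLp.linearEquiv 2 ℂ _).toLinearMap ∘ₗ T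
    ∘ₗ (WithLp.linearEquiv 2 ℂ (ℂ × EuclideanSpace ℂ (Fin d × Fin n))).symm.toLinearMap
    ∘ₗ (LinearMap.inr ℂ ℂ _)

lemma stmt8B_apply (m : EuclideanSpace ℂ (Fin d × Fin n)) :
    stmt8B d n T m = (T (stmt8mk d n 0 m)).fst := rfl

lemma stmt8D_apply (m : EuclideanSpace ℂ (Fin d × Fin n)) :
    stmt8D d n T m = (T (stmt8mk d n 0 m)).snd := rfl

lemma stmt8_decomp (t : ℂ) (m : EuclideanSpace ℂ (Fin d × Fin n)) :
    stmt8mk d n t m = t • stmt8mk d n 1 0 + stmt8mk d n 0 m := by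
  rw [WithLp.ext_iff]
  apply Prod.ext
  · show t = t • (1:ℂ) + 0
    simp
  · show m = t • (0 : EuclideanSpace ℂ (Fin d × Fin n)) + m
    simp

lemma stmt8T_fst (t : ℂ) (m : EuclideanSpace ℂ (Fin d × Fin n)) :
    (T (stmt8mk d n t m)).fst = t * stmt8a d n T + stmt8B d n T m := by
  rw [stmt8_decomp, map_add, map_smul, stmt8B_apply]
  rw [WithLp.add_fst, WithLp.smul_fst]
  rfl

lemma stmt8T_snd (t : ℂ) (m : EuclideanSpace ℂ (Fin d × Fin n)) :
    (T (stmt8mk d n t m)).snd = t • stmt8C d n T + stmt8D d n T m := by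
  rw [stmt8_decomp, map_add, map_smul, stmt8D_apply]
  rw [WithLp.add_snd, WithLp.smul_snd]
  rfl

def stmt8Glin : EuclideanSpace ℂ (Fin d) →ₗ[ℂ]
    (EuclideanSpace ℂ (Fin n) →ₗ[ℂ] EuclideanSpace ℂ (Fin n)) where
  toFun w := stmt8D d n T ∘ₗ stmt8Ebil d n w
  map_add' w w' := by refine LinearMap.ext fun x => ?_; simp [map_add]
  map_smul' t w := by refine LinearMap.ext fun x => ?_; simp

/-- Continuous-linear-map version of `w ↦ D ∘ E(w)`. -/
def stmt8GC : EuclideanSpace ℂ (Fin d) →L[ℂ]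
    (EuclideanSpace ℂ (Fin n) →L[ℂ] EuclideanSpace ℂ (Fin n)) :=
  LinearMap.toContinuousLinearMap
    ((LinearMap.toContinuousLinearMap :
        (EuclideanSpace ℂ (Fin n) →ₗ[ℂ] EuclideanSpace ℂ (Fin n))
          ≃ₗ[ℂ] (EuclideanSpace ℂ (Fin n) →L[ℂ] EuclideanSpace ℂ (Fin n))).toLinearMap
      ∘ₗ stmt8Glin d n T)

@[simp] lemma stmt8GC_apply (w : EuclideanSpace ℂ (Fin d)) (x : EuclideanSpace ℂ (Fin n)) :
    stmt8GC d n T w x = stmt8D d n T (stmt8Ebil d n w x) := by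
  simp [stmt8GC, stmt8Glin]

def stmt8EC : EuclideanSpace ℂ (Fin d) →L[ℂ]
    (EuclideanSpace ℂ (Fin n) →L[ℂ] EuclideanSpace ℂ (Fin d × Fin n)) :=
  LinearMap.toContinuousLinearMap
    ((LinearMap.toContinuousLinearMap :
        (EuclideanSpace ℂ (Fin n) →ₗ[ℂ] EuclideanSpace ℂ (Fin d × Fin n))
          ≃ₗ[ℂ] (EuclideanSpace ℂ (Fin n) →L[ℂ] EuclideanSpace ℂ (Fin d × Fin n))).toLinearMap
      ∘ₗ stmt8Ebil d n)

@[simp] lemma stmt8EC_apply (w : EuclideanSpace ℂ (Fin d)) (x : EuclideanSpace ℂ (Fin n)) :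
    stmt8EC d n w x = stmt8Ebil d n w x := by
  simp [stmt8EC]

def stmt8BC : EuclideanSpace ℂ (Fin d × Fin n) →L[ℂ] ℂ :=
  LinearMap.toContinuousLinearMap (stmt8B d n T)

@[simp] lemma stmt8BC_apply (m : EuclideanSpace ℂ (Fin d × Fin n)) :
    stmt8BC d n T m = stmt8B d n T m := by simp [stmt8BC]

/-- The interpolating function from the realization formula. -/
def stmt8phi (w : EuclideanSpace ℂ (Fin d)) : ℂ :=
  stmt8a d n T + stmt8BC d n T (stmt8EC d n w
    (Ring.inverse ((1 : EuclideanSpace ℂ (Fin n) →L[ℂ] EuclideanSpace ℂ (Fin n))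
        - stmt8GC d n T w) (stmt8C d n T)))

theorem stmt8_realization
    (hT : ∀ u, ‖T u‖ ≤ ‖u‖) :
    (DifferentiableOn ℂ (stmt8phi d n T) (ball (0 : EuclideanSpace ℂ (Fin d)) 1)) ∧
    (∀ w ∈ ball (0 : EuclideanSpace ℂ (Fin d)) 1, ‖stmt8phi d n T w‖ ≤ 1) ∧
    (∀ (lam : Fin n → EuclideanSpace ℂ (Fin d)) (v : Fin n → EuclideanSpace ℂ (Fin n))
      (z : Fin n → ℂ), (∀ i, ‖lam i‖ < 1) →
      (∀ i, T (stmt8mk d n 1 (stmt8Ebil d n (lam i) (v i))) = stmt8mk2 n (z i) (v i)) →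
      ∀ i, stmt8phi d n T (lam i) = z i) := by
  have hD : ∀ m, ‖stmt8D d n T m‖ ≤ ‖m‖ := by
    intro m
    rw [stmt8D_apply]
    have h1 : ‖(T (stmt8mk d n 0 m)).snd‖ ≤ ‖T (stmt8mk d n 0 m)‖ := by
      have := stmt8_prod_norm_sq (T (stmt8mk d n 0 m))
      nlinarith [norm_nonneg (T (stmt8mk d n 0 m)), norm_nonneg ((T (stmt8mk d n 0 m)).fst),
        norm_nonneg ((T (stmt8mk d n 0 m)).snd)]
    have h2 : ‖stmt8mk d n 0 m‖ = ‖m‖ := by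
      have h3 := stmt8_prod_norm_sq (stmt8mk d n 0 m)
      rw [stmt8mk_fst, stmt8mk_snd, norm_zero] at h3
      nlinarith [norm_nonneg (stmt8mk d n 0 m), norm_nonneg m]
    exact h1.trans ((hT _).trans_eq h2)
  have hGnorm : ∀ w, ‖stmt8GC d n T w‖ ≤ ‖w‖ := by
    intro w
    refine ContinuousLinearMap.opNorm_le_bound _ (norm_nonneg w) fun x => ?_
    rw [stmt8GC_apply]
    calc ‖stmt8D d n T (stmt8Ebil d n w x)‖ ≤ ‖stmt8Ebil d n w x‖ := hD _
      _ = ‖w‖ * ‖x‖ := stmt8Ebil_norm d n w x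
  have hunit : ∀ w : EuclideanSpace ℂ (Fin d), ‖w‖ < 1 →
      IsUnit ((1 : EuclideanSpace ℂ (Fin n) →L[ℂ] EuclideanSpace ℂ (Fin n))
        - stmt8GC d n T w) := by
    intro w hw
    exact ⟨Units.oneSub _ ((hGnorm w).trans_lt hw), rfl⟩
  have hkey : ∀ w : EuclideanSpace ℂ (Fin d), ‖w‖ < 1 →
      ∀ x : EuclideanSpace ℂ (Fin n),
      x = Ring.inverse ((1 : EuclideanSpace ℂ (Fin n) →L[ℂ] EuclideanSpace ℂ (Fin n))
          - stmt8GC d n T w) (stmt8C d n T) →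
      (T (stmt8mk d n 1 (stmt8Ebil d n w x))).fst = stmt8phi d n T w
      ∧ (T (stmt8mk d n 1 (stmt8Ebil d n w x))).snd = x := by
    intro w hw x hx
    have hsolve : stmt8C d n T + stmt8D d n T (stmt8Ebil d n w x) = x := by
      have h1 : ((1 : EuclideanSpace ℂ (Fin n) →L[ℂ] EuclideanSpace ℂ (Fin n))
          - stmt8GC d n T w) x = stmt8C d n T := by
        rw [hx, ← ContinuousLinearMap.mul_apply]
        rw [Ring.mul_inverse_cancel _ (hunit w hw)]
        rfl
      have h2 : x - stmt8GC d n T w x = stmt8C d n T := by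
        rw [← h1]; rfl
      rw [← stmt8GC_apply]
      linear_combination (norm := module) -h2
    constructor
    · rw [stmt8T_fst]
      rw [stmt8phi, hx]
      simp
    · rw [stmt8T_snd, one_smul]
      exact hsolve
  refine ⟨?_, ?_, ?_⟩
  · intro w hw
    rw [mem_ball_zero_iff] at hw
    apply DifferentiableAt.differentiableWithinAt
    have d1 : DifferentiableAt ℂ (fun w : EuclideanSpace ℂ (Fin d) =>
        Ring.inverse ((1 : EuclideanSpace ℂ (Fin n) →L[ℂ] EuclideanSpace ℂ (Fin n))
          - stmt8GC d n T w)) w := by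
      refine DifferentiableAt.inverse ?_ (hunit w hw)
      exact (differentiableAt_const _).sub (stmt8GC d n T).differentiableAt
    have d2 : DifferentiableAt ℂ (fun w : EuclideanSpace ℂ (Fin d) =>
        Ring.inverse ((1 : EuclideanSpace ℂ (Fin n) →L[ℂ] EuclideanSpace ℂ (Fin n))
          - stmt8GC d n T w) (stmt8C d n T)) w :=
      d1.clm_apply (differentiableAt_const _)
    have d3 : DifferentiableAt ℂ (fun w : EuclideanSpace ℂ (Fin d) =>
        stmt8EC d n w (Ring.inverse ((1 : EuclideanSpace ℂ (Fin n) →L[ℂ]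
          EuclideanSpace ℂ (Fin n)) - stmt8GC d n T w) (stmt8C d n T))) w :=
      (stmt8EC d n).differentiableAt.clm_apply d2
    have d4 : DifferentiableAt ℂ (fun w : EuclideanSpace ℂ (Fin d) =>
        stmt8BC d n T (stmt8EC d n w (Ring.inverse ((1 : EuclideanSpace ℂ (Fin n) →L[ℂ]
          EuclideanSpace ℂ (Fin n)) - stmt8GC d n T w) (stmt8C d n T)))) w :=
      (differentiableAt_const (stmt8BC d n T)).clm_apply d3
    exact (differentiableAt_const (stmt8a d n T)).add d4
  · intro w hw
    rw [mem_ball_zero_iff] at hw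
    set x := Ring.inverse ((1 : EuclideanSpace ℂ (Fin n) →L[ℂ] EuclideanSpace ℂ (Fin n))
        - stmt8GC d n T w) (stmt8C d n T) with hxdef
    obtain ⟨h1, h2⟩ := hkey w hw x hxdef
    have hnu : ‖stmt8mk d n 1 (stmt8Ebil d n w x)‖ ^ 2 = 1 + ‖w‖ ^ 2 * ‖x‖ ^ 2 := by
      have h3 := stmt8_prod_norm_sq (stmt8mk d n 1 (stmt8Ebil d n w x))
      rw [stmt8mk_fst, stmt8mk_snd, norm_one, stmt8Ebil_norm] at h3
      rw [h3]; ring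
    have hnTu : ‖T (stmt8mk d n 1 (stmt8Ebil d n w x))‖ ^ 2
        = ‖stmt8phi d n T w‖ ^ 2 + ‖x‖ ^ 2 := by
      have h3 := stmt8_prod_norm_sq (T (stmt8mk d n 1 (stmt8Ebil d n w x)))
      rw [h1, h2] at h3
      exact h3
    have hb := hT (stmt8mk d n 1 (stmt8Ebil d n w x))
    have hsq : ‖stmt8phi d n T w‖ ^ 2 + ‖x‖ ^ 2 ≤ 1 + ‖w‖ ^ 2 * ‖x‖ ^ 2 := by
      rw [← hnTu, ← hnu]
      exact pow_le_pow_left₀ (norm_nonneg _) hb 2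
    have h5 : ‖w‖ ^ 2 ≤ 1 := by nlinarith [norm_nonneg w]
    have h6 : 0 ≤ (1 - ‖w‖ ^ 2) * ‖x‖ ^ 2 :=
      mul_nonneg (by linarith) (sq_nonneg _)
    have h7 : ‖stmt8phi d n T w‖ ^ 2 ≤ 1 := by nlinarith
    nlinarith [norm_nonneg (stmt8phi d n T w)]
  · intro lam v z hlam hTx i
    have hI := congrArg WithLp.fst (hTx i)
    have hII := congrArg WithLp.snd (hTx i)
    rw [stmt8T_fst] at hI
    rw [stmt8T_snd, one_smul] at hII
    simp only [stmt8mk2_fst] at hI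
    simp only [stmt8mk2_snd] at hII
    have hinv : Ring.inverse ((1 : EuclideanSpace ℂ (Fin n) →L[ℂ] EuclideanSpace ℂ (Fin n))
        - stmt8GC d n T (lam i)) (stmt8C d n T) = v i := by
      have hC : ((1 : EuclideanSpace ℂ (Fin n) →L[ℂ] EuclideanSpace ℂ (Fin n))
          - stmt8GC d n T (lam i)) (v i) = stmt8C d n T := by
        have h4 : v i - stmt8GC d n T (lam i) (v i) = stmt8C d n T := by
          rw [stmt8GC_apply]
          linear_combination (norm := module) -hII
        rw [← h4]; rfl
      rw [← hC, ← ContinuousLinearMap.mul_apply, Ring.inverse_mul_cancel _ (hunit _ (hlam i))]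
      rfl
    rw [stmt8phi, hinv]
    simp only [stmt8BC_apply, stmt8EC_apply]
    rw [← hI]
    ring

end Stmt8Aux2

/-- Sufficiency of positivity of the Pick matrix formed with the Drury–Arveson kernel
`(1 - ⟨λᵢ,λⱼ⟩)⁻¹` for `H^∞`-interpolation on the unit ball of `ℂ^d`. -/
theorem stmt8 (d n : ℕ) (hd : 0 < d)
    (lam : Fin n → EuclideanSpace ℂ (Fin d))
    (hmem : ∀ i, lam i ∈ ball (0 : EuclideanSpace ℂ (Fin d)) 1)
    (hinj : Function.Injective lam) (z : Fin n → ℂ)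
    (hpos : (Matrix.of fun i j : Fin n =>
      (1 - z i * (starRingEnd ℂ) (z j)) *
        (1 - ∑ k, lam i k * (starRingEnd ℂ) (lam j k))⁻¹).PosSemidef) :
    ∃ φ : EuclideanSpace ℂ (Fin d) → ℂ,
      DifferentiableOn ℂ φ (ball (0 : EuclideanSpace ℂ (Fin d)) 1) ∧
      (∀ w ∈ ball (0 : EuclideanSpace ℂ (Fin d)) 1, ‖φ w‖ ≤ 1) ∧
      ∀ i, φ (lam i) = z i := by
  classical
  have hlam : ∀ i, ‖lam i‖ < 1 := fun i => mem_ball_zero_iff.mp (hmem i)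
  set K : Fin n → Fin n → ℂ := fun i j => ∑ k, lam i k * (starRingEnd ℂ) (lam j k) with hKdef
  have hKinner : ∀ i j, K i j = ⟪lam j, lam i⟫_ℂ := by
    intro i j
    rw [hKdef, PiLp.inner_apply]
    exact Finset.sum_congr rfl fun k _ => by simp [RCLike.inner_apply, mul_comm]
  have hKlt : ∀ i j, ‖K i j‖ < 1 := by
    intro i j
    rw [hKinner]
    calc ‖⟪lam j, lam i⟫_ℂ‖ ≤ ‖lam j‖ * ‖lam i‖ := norm_inner_le_norm _ _
      _ < 1 := by nlinarith [hlam i, hlam j, norm_nonneg (lam i), norm_nonneg (lam j)]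
  have hKne : ∀ i j, (1 : ℂ) - K i j ≠ 0 := by
    intro i j h
    have h2 := hKlt i j
    have h3 : K i j = 1 := by linear_combination -h
    rw [h3] at h2
    simp at h2
  obtain ⟨Cm, hCm⟩ : ∃ Cm : Matrix (Fin n) (Fin n) ℂ, (Matrix.of fun i j : Fin n =>
      (1 - z i * (starRingEnd ℂ) (z j)) * (1 - K i j)⁻¹) = Cm.conjTranspose * Cm := by
    open scoped MatrixOrder in exact CStarAlgebra.nonneg_iff_eq_star_mul_self.mp hpos.nonneg
  set v : Fin n → EuclideanSpace ℂ (Fin n) := fun i => WithLp.toLp 2 (fun s => (starRingEnd ℂ) (Cm s i))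
    with hvdef
  have hAji : ∀ i j, (∑ s, (starRingEnd ℂ) (v i s) * v j s)
      = (1 - z j * (starRingEnd ℂ) (z i)) * (1 - K j i)⁻¹ := by
    intro i j
    have h1 : (Cm.conjTranspose * Cm) j i
        = (1 - z j * (starRingEnd ℂ) (z i)) * (1 - K j i)⁻¹ := by
      rw [← hCm]
      simp only [Matrix.of_apply, hKdef]
    rw [← h1, Matrix.mul_apply]
    refine Finset.sum_congr rfl fun s _ => ?_
    simp only [hvdef, PiLp.toLp_apply, Matrix.conjTranspose_apply, RingHom.id_apply, RCLike.star_def,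
      starRingEnd_self_apply]
    ring
  have hGram : ∀ i j, ⟪stmt8mk d n 1 (stmt8Ebil d n (lam i) (v i)),
        stmt8mk d n 1 (stmt8Ebil d n (lam j) (v j))⟫_ℂ
      = ⟪stmt8mk2 n (z i) (v i), stmt8mk2 n (z j) (v j)⟫_ℂ := by
    intro i j
    rw [WithLp.prod_inner_apply, WithLp.prod_inner_apply]
    simp only [WithLp.ofLp_fst, WithLp.ofLp_snd, stmt8mk_fst, stmt8mk_snd, stmt8mk2_fst, stmt8mk2_snd]
    rw [PiLp.inner_apply, PiLp.inner_apply]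
    simp only [RCLike.inner_apply', stmt8Ebil_apply]
    have hsum : ∑ p : Fin d × Fin n,
          (starRingEnd ℂ) (lam i p.1 * v i p.2) * (lam j p.1 * v j p.2)
        = (∑ k, (starRingEnd ℂ) (lam i k) * lam j k)
            * (∑ s, (starRingEnd ℂ) (v i s) * v j s) := by
      rw [Fintype.sum_prod_type, Finset.sum_mul_sum]
      refine Finset.sum_congr rfl fun k _ => Finset.sum_congr rfl fun s _ => ?_
      simp only [map_mul]
      ring
    rw [hsum]
    have hK' : (∑ k, (starRingEnd ℂ) (lam i k) * lam j k) = K j i := by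
      simp only [hKdef]
      exact Finset.sum_congr rfl fun k _ => mul_comm _ _
    rw [hK', hAji i j]
    have h5 : ((1 - z j * (starRingEnd ℂ) (z i)) * (1 - K j i)⁻¹) * (1 - K j i)
        = 1 - z j * (starRingEnd ℂ) (z i) :=
      inv_mul_cancel_right₀ (hKne j i) _
    simp only [map_one]
    linear_combination -h5
  obtain ⟨T, hT, hTx⟩ := stmt8_exists_contraction
    (fun i => stmt8mk d n 1 (stmt8Ebil d n (lam i) (v i)))
    (fun i => stmt8mk2 n (z i) (v i)) hGram
  obtain ⟨hdiff, hbound, hint⟩ := stmt8_realization d n T hT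
  exact ⟨stmt8phi d n T, hdiff, hbound, hint lam v z hlam hTx⟩
end
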